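/- Moments of first derivatives of the DAR(1) quasi-log-likelihood (Lemma A.10 of the paper, first-order part): In the DAR(1) setup, for every real d ≥ 1 and each parameter coordinate θ_i ∈ {φ, ω, α}, E[ sup_{θ∈Θ} |(∂l/∂θ_i)(θ)|^d ] < ∞. -/

import Mathlib

open MeasureTheory ProbabilityTheory

/-- DAR(1) parameter space `Θ = {(φ, ω, α) : |φ| ≤ c₁, c₂ ≤ ω ≤ c₃, c₄ ≤ α ≤ c₅}`. -/
def darTheta (c₁ c₂ c₃ c₄ c₅ : ℝ) : Set (ℝ × ℝ × ℝ) :=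
  {θ | |θ.1| ≤ c₁ ∧ c₂ ≤ θ.2.1 ∧ θ.2.1 ≤ c₃ ∧ c₄ ≤ θ.2.2 ∧ θ.2.2 ≤ c₅}

/-- DAR(1) Gaussian quasi-log-likelihood
`l(θ) = -(1/2) log(ω + α Y²) − (X − φ Y)²/(2(ω + α Y²))` for `θ = (φ, ω, α)`. -/
noncomputable def darL (Y X : ℝ) (θ : ℝ × ℝ × ℝ) : ℝ :=
  -(1 / 2) * Real.log (θ.2.1 + θ.2.2 * Y ^ 2)
    - (X - θ.1 * Y) ^ 2 / (2 * (θ.2.1 + θ.2.2 * Y ^ 2))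

set_option maxHeartbeats 1000000

lemma darL_fderiv_apply (Y X : ℝ) (θ dir : ℝ × ℝ × ℝ) (h : θ.2.1 + θ.2.2 * Y ^ 2 ≠ 0) :
    fderiv ℝ (darL Y X) θ dir =
      (X - θ.1 * Y) * Y * dir.1 / (θ.2.1 + θ.2.2 * Y ^ 2)
        + ((X - θ.1 * Y) ^ 2 / (2 * (θ.2.1 + θ.2.2 * Y ^ 2) ^ 2)
            - 1 / (2 * (θ.2.1 + θ.2.2 * Y ^ 2))) * (dir.2.1 + dir.2.2 * Y ^ 2) := by
  classical
  set Pφ := ContinuousLinearMap.fst ℝ ℝ (ℝ × ℝ) with hPφ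
  set Pω := (ContinuousLinearMap.fst ℝ ℝ ℝ).comp (ContinuousLinearMap.snd ℝ ℝ (ℝ × ℝ)) with hPω
  set Pα := (ContinuousLinearMap.snd ℝ ℝ ℝ).comp (ContinuousLinearMap.snd ℝ ℝ (ℝ × ℝ)) with hPα
  set Lu : (ℝ × ℝ × ℝ) →L[ℝ] ℝ := Pω + (Y ^ 2) • Pα with hLu
  set Lv : (ℝ × ℝ × ℝ) →L[ℝ] ℝ := -(Y • Pφ) with hLv
  have hufun : (fun θ : ℝ × ℝ × ℝ => θ.2.1 + θ.2.2 * Y ^ 2) = fun θ => Lu θ := by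
    funext p
    simp [hLu, hPω, hPα]
    ring
  have hu : HasFDerivAt (fun θ : ℝ × ℝ × ℝ => θ.2.1 + θ.2.2 * Y ^ 2) Lu θ := by
    rw [hufun]; exact Lu.hasFDerivAt
  have hvfun : (fun θ : ℝ × ℝ × ℝ => X - θ.1 * Y) = fun θ => X + Lv θ := by
    funext p
    simp [hLv, hPφ]
    ring
  have hv : HasFDerivAt (fun θ : ℝ × ℝ × ℝ => X - θ.1 * Y) Lv θ := by
    rw [hvfun]
    simpa using Lv.hasFDerivAt
  have h2u : (2 : ℝ) * (θ.2.1 + θ.2.2 * Y ^ 2) ≠ 0 := by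
    simp [h]
  have hinv : HasFDerivAt (fun p : ℝ × ℝ × ℝ => ((2 : ℝ) * (p.2.1 + p.2.2 * Y ^ 2))⁻¹)
      ((-((2 * (θ.2.1 + θ.2.2 * Y ^ 2)) ^ 2)⁻¹) • ((2 : ℝ) • Lu)) θ :=
    (hasDerivAt_inv h2u).comp_hasFDerivAt θ (hu.const_mul 2)
  have hv2 : HasFDerivAt (fun p : ℝ × ℝ × ℝ => (X - p.1 * Y) ^ 2)
      ((X - θ.1 * Y) • Lv + (X - θ.1 * Y) • Lv) θ := by
    have := hv.mul hv
    have hf : (fun p : ℝ × ℝ × ℝ => (X - p.1 * Y) ^ 2) = fun p => (X - p.1 * Y) * (X - p.1 * Y) := by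
      funext p; ring
    rw [hf]; exact this
  have hlog : HasFDerivAt (fun p : ℝ × ℝ × ℝ => -(1 / 2) * Real.log (p.2.1 + p.2.2 * Y ^ 2))
      ((-(1 / 2) : ℝ) • (((θ.2.1 + θ.2.2 * Y ^ 2))⁻¹ • Lu)) θ := (hu.log h).const_mul _
  have hmul := hv2.mul hinv
  have hL : HasFDerivAt (darL Y X)
      (((-(1 / 2) : ℝ) • (((θ.2.1 + θ.2.2 * Y ^ 2))⁻¹ • Lu))
        - (((X - θ.1 * Y) ^ 2) • ((-((2 * (θ.2.1 + θ.2.2 * Y ^ 2)) ^ 2)⁻¹) • ((2 : ℝ) • Lu))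
            + ((2 * (θ.2.1 + θ.2.2 * Y ^ 2))⁻¹) • ((X - θ.1 * Y) • Lv + (X - θ.1 * Y) • Lv))) θ := by
    have : darL Y X = fun p : ℝ × ℝ × ℝ =>
        -(1 / 2) * Real.log (p.2.1 + p.2.2 * Y ^ 2)
          - (X - p.1 * Y) ^ 2 * ((2 : ℝ) * (p.2.1 + p.2.2 * Y ^ 2))⁻¹ := by
      funext p; simp [darL, div_eq_mul_inv]
    rw [this]
    exact hlog.sub hmul
  rw [hL.fderiv]
  simp [hLu, hLv, hPω, hPα, hPφ]
  field_simp
  ring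

noncomputable def darK (c₁ ω₀ α₀ : ℝ) : ℝ := 2 * c₁ + Real.sqrt ω₀ + Real.sqrt α₀
noncomputable def darB (c₂ c₄ : ℝ) : ℝ := 1 / c₂ + 1 / c₄
noncomputable def darC (c₁ c₂ c₄ ω₀ α₀ : ℝ) : ℝ :=
  2 * darK c₁ ω₀ α₀ * darB c₂ c₄ + (darK c₁ ω₀ α₀) ^ 2 * (darB c₂ c₄) ^ 2 + darB c₂ c₄

lemma darL_deriv_bound (c₁ c₂ c₄ φ₀ ω₀ α₀ : ℝ) (hc₁ : 0 < c₁) (hc₂ : 0 < c₂) (hc₄ : 0 < c₄)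
    (hφ₀ : |φ₀| ≤ c₁) (hω₀ : 0 ≤ ω₀) (hα₀ : 0 ≤ α₀) (Yv Ev : ℝ)
    (θ : ℝ × ℝ × ℝ) (hθ1 : |θ.1| ≤ c₁) (hθ2 : c₂ ≤ θ.2.1) (hθ3 : c₄ ≤ θ.2.2)
    (dir : ℝ × ℝ × ℝ) (hd1 : |dir.1| ≤ 1) (hd2 : |dir.2.1| ≤ 1) (hd3 : |dir.2.2| ≤ 1) :
    |fderiv ℝ (darL Yv (φ₀ * Yv + Ev * Real.sqrt (ω₀ + α₀ * Yv ^ 2))) θ dir| ≤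
      darC c₁ c₂ c₄ ω₀ α₀ * (1 + |Ev|) ^ 2 := by
  have hu0 : 0 < θ.2.1 + θ.2.2 * Yv ^ 2 := by nlinarith [sq_nonneg Yv]
  rw [darL_fderiv_apply _ _ _ _ hu0.ne']
  set K := darK c₁ ω₀ α₀ with hKdef
  set B := darB c₂ c₄ with hBdef
  set u := θ.2.1 + θ.2.2 * Yv ^ 2 with hu
  set X := φ₀ * Yv + Ev * Real.sqrt (ω₀ + α₀ * Yv ^ 2) with hX
  set v := X - θ.1 * Yv with hv
  set s := |Yv| with hs
  set t := |Ev| with ht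
  have hs0 : 0 ≤ s := abs_nonneg _
  have ht0 : 0 ≤ t := abs_nonneg _
  have hs2 : s ^ 2 = Yv ^ 2 := sq_abs Yv
  have huc : c₂ + c₄ * Yv ^ 2 ≤ u := by nlinarith [sq_nonneg Yv]
  have hK0 : 0 ≤ K := by
    rw [hKdef, darK]
    positivity
  have hB0 : 0 < B := by
    rw [hBdef, darB]
    positivity
  have hBc2 : 1 ≤ B * c₂ := by
    rw [hBdef, darB]
    rw [add_mul, div_mul_cancel₀ _ hc₂.ne']
    have := mul_pos (one_div_pos.mpr hc₄) hc₂
    linarith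
  have hBc4 : 1 ≤ B * c₄ := by
    rw [hBdef, darB]
    rw [add_mul, div_mul_cancel₀ _ hc₄.ne']
    have := mul_pos (one_div_pos.mpr hc₂) hc₄
    linarith
  have hq4 : 1 + Yv ^ 2 ≤ B * u := by
    have : B * (c₂ + c₄ * Yv ^ 2) ≤ B * u := by
      exact mul_le_mul_of_nonneg_left huc hB0.le
    nlinarith [sq_nonneg Yv]
  -- bound on |v|
  have hsqrt : Real.sqrt (ω₀ + α₀ * Yv ^ 2) ≤ Real.sqrt ω₀ + Real.sqrt α₀ * s := by
    have h1 : ω₀ + α₀ * Yv ^ 2 ≤ (Real.sqrt ω₀ + Real.sqrt α₀ * s) ^ 2 := by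
      nlinarith [Real.sq_sqrt hω₀, Real.sq_sqrt hα₀, Real.sqrt_nonneg ω₀,
        Real.sqrt_nonneg α₀, hs2, mul_nonneg (Real.sqrt_nonneg ω₀) (Real.sqrt_nonneg α₀)]
    calc Real.sqrt (ω₀ + α₀ * Yv ^ 2) ≤ Real.sqrt ((Real.sqrt ω₀ + Real.sqrt α₀ * s) ^ 2) :=
          Real.sqrt_le_sqrt h1
      _ = Real.sqrt ω₀ + Real.sqrt α₀ * s := by
          rw [Real.sqrt_sq (by positivity)]
  have hvb : |v| ≤ K * (1 + t) * (1 + s) := by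
    have h1 : |v| ≤ |φ₀ - θ.1| * s + t * Real.sqrt (ω₀ + α₀ * Yv ^ 2) := by
      have : v = (φ₀ - θ.1) * Yv + Ev * Real.sqrt (ω₀ + α₀ * Yv ^ 2) := by
        rw [hv, hX]; ring
      rw [this]
      calc |(φ₀ - θ.1) * Yv + Ev * Real.sqrt (ω₀ + α₀ * Yv ^ 2)|
          ≤ |(φ₀ - θ.1) * Yv| + |Ev * Real.sqrt (ω₀ + α₀ * Yv ^ 2)| := abs_add_le _ _
        _ = |φ₀ - θ.1| * s + t * |Real.sqrt (ω₀ + α₀ * Yv ^ 2)| := by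
            rw [abs_mul, abs_mul]
        _ = |φ₀ - θ.1| * s + t * Real.sqrt (ω₀ + α₀ * Yv ^ 2) := by
            rw [abs_of_nonneg (Real.sqrt_nonneg _)]
    have h2 : |φ₀ - θ.1| ≤ 2 * c₁ := by
      calc |φ₀ - θ.1| ≤ |φ₀| + |θ.1| := abs_sub _ _
        _ ≤ 2 * c₁ := by linarith
    have h3 : t * Real.sqrt (ω₀ + α₀ * Yv ^ 2) ≤ t * (Real.sqrt ω₀ + Real.sqrt α₀ * s) :=
      mul_le_mul_of_nonneg_left hsqrt ht0
    have hKe : K = 2 * c₁ + Real.sqrt ω₀ + Real.sqrt α₀ := by rw [hKdef, darK]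
    nlinarith [Real.sqrt_nonneg ω₀, Real.sqrt_nonneg α₀, Real.sqrt_nonneg (ω₀ + α₀ * Yv ^ 2),
      mul_nonneg ht0 hs0, mul_nonneg (mul_nonneg ht0 hs0) (Real.sqrt_nonneg α₀),
      mul_nonneg hs0 (Real.sqrt_nonneg ω₀)]
  have hslin : s ≤ 1 + Yv ^ 2 := by nlinarith [sq_nonneg (s - 1), hs2]
  -- term 1
  have hT1 : |v * Yv * dir.1 / u| ≤ 2 * K * B * (1 + t) := by
    rw [abs_div, abs_of_pos hu0, div_le_iff₀ hu0]
    have e1 : |v * Yv * dir.1| = |v| * s * |dir.1| := by rw [abs_mul, abs_mul]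
    rw [e1]
    have hKt0 : (0:ℝ) ≤ K * (1 + t) := mul_nonneg hK0 (by linarith)
    have h7 : (1 + s) * s ≤ 2 * (B * u) := by nlinarith
    calc |v| * s * |dir.1| ≤ |v| * s :=
          mul_le_of_le_one_right (mul_nonneg (abs_nonneg v) hs0) hd1
      _ ≤ K * (1 + t) * (1 + s) * s := mul_le_mul_of_nonneg_right hvb hs0
      _ = K * (1 + t) * ((1 + s) * s) := by ring
      _ ≤ K * (1 + t) * (2 * (B * u)) := mul_le_mul_of_nonneg_left h7 hKt0
      _ = 2 * K * B * (1 + t) * u := by ring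
  -- term 2
  have hv2b : v ^ 2 ≤ K ^ 2 * (1 + t) ^ 2 * (1 + s) ^ 2 := by
    calc v ^ 2 = |v| ^ 2 := (sq_abs v).symm
      _ ≤ (K * (1 + t) * (1 + s)) ^ 2 := pow_le_pow_left₀ (abs_nonneg v) hvb 2
      _ = K ^ 2 * (1 + t) ^ 2 * (1 + s) ^ 2 := by ring
  have h1s2 : (1 + s) ^ 2 ≤ 2 * (1 + Yv ^ 2) := by nlinarith [sq_nonneg (s - 1), hs2]
  have hT2a : v ^ 2 / (2 * u ^ 2) * (1 + Yv ^ 2) ≤ K ^ 2 * B ^ 2 * (1 + t) ^ 2 := by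
    rw [div_mul_eq_mul_div, div_le_iff₀ (by positivity)]
    have hy0 : (0:ℝ) ≤ 1 + Yv ^ 2 := by positivity
    have hKt : (0:ℝ) ≤ K ^ 2 * (1 + t) ^ 2 := by positivity
    calc v ^ 2 * (1 + Yv ^ 2)
        ≤ K ^ 2 * (1 + t) ^ 2 * (1 + s) ^ 2 * (1 + Yv ^ 2) :=
          mul_le_mul_of_nonneg_right hv2b hy0
      _ ≤ K ^ 2 * (1 + t) ^ 2 * (2 * (1 + Yv ^ 2)) * (1 + Yv ^ 2) :=
          mul_le_mul_of_nonneg_right (mul_le_mul_of_nonneg_left h1s2 hKt) hy0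
      _ = 2 * (K ^ 2 * (1 + t) ^ 2) * ((1 + Yv ^ 2) * (1 + Yv ^ 2)) := by ring
      _ ≤ 2 * (K ^ 2 * (1 + t) ^ 2) * ((B * u) * (B * u)) := by
          refine mul_le_mul_of_nonneg_left ?_ (by positivity)
          exact mul_le_mul hq4 hq4 hy0 (le_trans hy0 hq4)
      _ = K ^ 2 * B ^ 2 * (1 + t) ^ 2 * (2 * u ^ 2) := by ring
  have hT2b : 1 / (2 * u) * (1 + Yv ^ 2) ≤ B := by
    rw [div_mul_eq_mul_div, one_mul, div_le_iff₀ (by positivity)]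
    nlinarith [hq4, mul_nonneg hB0.le hu0.le]
  have hdirb : |dir.2.1 + dir.2.2 * Yv ^ 2| ≤ 1 + Yv ^ 2 := by
    calc |dir.2.1 + dir.2.2 * Yv ^ 2| ≤ |dir.2.1| + |dir.2.2| * Yv ^ 2 := by
          rw [show |dir.2.2| * Yv ^ 2 = |dir.2.2 * Yv ^ 2| by rw [abs_mul, abs_of_nonneg (sq_nonneg Yv)]]
          exact abs_add_le _ _
      _ ≤ 1 + Yv ^ 2 := by
          have := mul_le_mul_of_nonneg_right hd3 (sq_nonneg Yv)
          linarith
  have hmid : |v ^ 2 / (2 * u ^ 2) - 1 / (2 * u)| ≤ v ^ 2 / (2 * u ^ 2) + 1 / (2 * u) := by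
    calc |v ^ 2 / (2 * u ^ 2) - 1 / (2 * u)| ≤ |v ^ 2 / (2 * u ^ 2)| + |1 / (2 * u)| := abs_sub _ _
      _ = v ^ 2 / (2 * u ^ 2) + 1 / (2 * u) := by
          rw [abs_of_nonneg (by positivity), abs_of_nonneg (by positivity)]
  have hT2 : |(v ^ 2 / (2 * u ^ 2) - 1 / (2 * u)) * (dir.2.1 + dir.2.2 * Yv ^ 2)| ≤
      K ^ 2 * B ^ 2 * (1 + t) ^ 2 + B := by
    rw [abs_mul]
    have hnn : (0:ℝ) ≤ v ^ 2 / (2 * u ^ 2) + 1 / (2 * u) := by positivity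
    calc |v ^ 2 / (2 * u ^ 2) - 1 / (2 * u)| * |dir.2.1 + dir.2.2 * Yv ^ 2|
        ≤ (v ^ 2 / (2 * u ^ 2) + 1 / (2 * u)) * (1 + Yv ^ 2) := by
          apply mul_le_mul hmid hdirb (abs_nonneg _) hnn
      _ = v ^ 2 / (2 * u ^ 2) * (1 + Yv ^ 2) + 1 / (2 * u) * (1 + Yv ^ 2) := by ring
      _ ≤ K ^ 2 * B ^ 2 * (1 + t) ^ 2 + B := add_le_add hT2a hT2b
  calc |v * Yv * dir.1 / u + (v ^ 2 / (2 * u ^ 2) - 1 / (2 * u)) * (dir.2.1 + dir.2.2 * Yv ^ 2)|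
      ≤ |v * Yv * dir.1 / u| + |(v ^ 2 / (2 * u ^ 2) - 1 / (2 * u)) * (dir.2.1 + dir.2.2 * Yv ^ 2)| :=
        abs_add_le _ _
    _ ≤ 2 * K * B * (1 + t) + (K ^ 2 * B ^ 2 * (1 + t) ^ 2 + B) := add_le_add hT1 hT2
    _ ≤ (2 * K * B + K ^ 2 * B ^ 2 + B) * (1 + t) ^ 2 := by
        have h0 : (0:ℝ) ≤ 2 * K * B := by positivity
        have h1t : (1:ℝ) ≤ 1 + t := by linarith
        have ha : (1 + t) ≤ (1 + t) ^ 2 := le_self_pow₀ h1t two_ne_zero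
        have hb : (1:ℝ) ≤ (1 + t) ^ 2 := one_le_pow₀ h1t
        have h1 : 2 * K * B * (1 + t) ≤ 2 * K * B * (1 + t) ^ 2 :=
          mul_le_mul_of_nonneg_left ha h0
        have h2 : B ≤ B * (1 + t) ^ 2 := le_mul_of_one_le_right hB0.le hb
        have h3 : 2 * K * B * (1 + t) + (K ^ 2 * B ^ 2 * (1 + t) ^ 2 + B) ≤
            2 * K * B * (1 + t) ^ 2 + K ^ 2 * B ^ 2 * (1 + t) ^ 2 + B * (1 + t) ^ 2 := by
          linarith
        exact le_trans h3 (le_of_eq (by ring))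
    _ = darC c₁ c₂ c₄ ω₀ α₀ * (1 + t) ^ 2 := by
        have hdarC : darC c₁ c₂ c₄ ω₀ α₀ = 2 * K * B + K ^ 2 * B ^ 2 + B := by
          rw [hKdef, hBdef]; rfl
        rw [hdarC]

lemma gauss_moment (C d : ℝ) (hC : 0 ≤ C) (hd : 0 ≤ d) :
    ∫⁻ x, ENNReal.ofReal ((C * (1 + |x|) ^ 2) ^ d) ∂(gaussianReal 0 1) < ⊤ := by
  have hgm : Measurable fun x : ℝ => ENNReal.ofReal ((C * (1 + |x|) ^ 2) ^ d) := by
    apply Measurable.ennreal_ofReal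
    exact (measurable_const.mul ((measurable_const.add measurable_abs).pow_const 2)).pow
      measurable_const
  rw [gaussianReal_of_var_ne_zero 0 one_ne_zero,
    lintegral_withDensity_eq_lintegral_mul _ (measurable_gaussianPDF 0 1) hgm]
  set Kc := C ^ d * Real.exp (4 * d ^ 2) with hKc
  have hbound : ∀ x : ℝ,
      (gaussianPDF 0 1 * fun x => ENNReal.ofReal ((C * (1 + |x|) ^ 2) ^ d)) x ≤
        ENNReal.ofReal (Kc * Real.exp (-(1/4) * x ^ 2)) := by
    intro x
    simp only [Pi.mul_apply, gaussianPDF]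
    rw [← ENNReal.ofReal_mul (gaussianPDFReal_nonneg 0 1 x)]
    apply ENNReal.ofReal_le_ofReal
    have hx0 : (0:ℝ) < 1 + |x| := by positivity
    have h1 : gaussianPDFReal 0 1 x ≤ Real.exp (-x ^ 2 / 2) := by
      rw [gaussianPDFReal]
      simp only [NNReal.coe_one, mul_one, sub_zero]
      apply mul_le_of_le_one_left (Real.exp_pos _).le
      have h2pi : (1:ℝ) ≤ Real.sqrt (2 * Real.pi) := by
        rw [show (1:ℝ) = Real.sqrt 1 from (Real.sqrt_one).symm]
        exact Real.sqrt_le_sqrt (by nlinarith [Real.pi_gt_three])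
      exact inv_le_one_of_one_le₀ h2pi
    have h2 : (C * (1 + |x|) ^ 2) ^ d ≤ C ^ d * Real.exp (2 * d * |x|) := by
      rw [Real.mul_rpow hC (by positivity)]
      apply mul_le_mul_of_nonneg_left _ (Real.rpow_nonneg hC d)
      have e1 : ((1 + |x|) ^ 2 : ℝ) ^ (d : ℝ) = (1 + |x|) ^ (2 * d) := by
        rw [show ((1 + |x|) ^ 2 : ℝ) = (1 + |x|) ^ ((2:ℕ) : ℝ) from
          (Real.rpow_natCast _ 2).symm, ← Real.rpow_mul hx0.le]
        norm_num
      rw [e1, Real.rpow_def_of_pos hx0]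
      apply Real.exp_le_exp.mpr
      have hlog : Real.log (1 + |x|) ≤ |x| := by
        have := Real.log_le_sub_one_of_pos hx0
        linarith
      calc Real.log (1 + |x|) * (2 * d) ≤ |x| * (2 * d) :=
            mul_le_mul_of_nonneg_right hlog (by linarith)
        _ = 2 * d * |x| := by ring
    calc gaussianPDFReal 0 1 x * (C * (1 + |x|) ^ 2) ^ d
        ≤ Real.exp (-x ^ 2 / 2) * (C ^ d * Real.exp (2 * d * |x|)) := by
          apply mul_le_mul h1 h2 (Real.rpow_nonneg (by positivity) d) (Real.exp_pos _).le
      _ = C ^ d * Real.exp (2 * d * |x| + (-x ^ 2 / 2)) := by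
          rw [Real.exp_add]; ring
      _ ≤ C ^ d * Real.exp (4 * d ^ 2 + (-(1/4) * x ^ 2)) := by
          apply mul_le_mul_of_nonneg_left _ (Real.rpow_nonneg hC d)
          apply Real.exp_le_exp.mpr
          nlinarith [sq_nonneg (|x| / 2 - 2 * d), sq_abs x]
      _ = Kc * Real.exp (-(1/4) * x ^ 2) := by
          rw [hKc, Real.exp_add]; ring
  calc ∫⁻ x, (gaussianPDF 0 1 * fun x => ENNReal.ofReal ((C * (1 + |x|) ^ 2) ^ d)) x
      ≤ ∫⁻ x, ENNReal.ofReal (Kc * Real.exp (-(1/4) * x ^ 2)) := lintegral_mono hbound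
    _ < ⊤ := by
        have : Integrable (fun x : ℝ => Kc * Real.exp (-(1/4) * x ^ 2)) := by
          exact (integrable_exp_neg_mul_sq (by norm_num : (0:ℝ) < 1/4)).const_mul Kc
        exact this.lintegral_lt_top

/-- Lemma A.10, first-order part: in the DAR(1) setup with standard Gaussian innovation
`e` independent of `Y` and `X = φ₀ Y + e √(ω₀ + α₀ Y²)`, for every `d ≥ 1` and each
parameter coordinate (direction `(1,0,0)`, `(0,1,0)` or `(0,0,1)` for `φ, ω, α`),
`E[sup_{θ∈Θ} |∂l/∂θᵢ(θ)|^d] < ∞`. -/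
theorem stmt13 {Ω : Type*} [MeasurableSpace Ω] (P : Measure Ω) [IsProbabilityMeasure P]
    (c₁ c₂ c₃ c₄ c₅ : ℝ)
    (hc₁ : 0 < c₁) (hc₂ : 0 < c₂) (hc₃ : 0 < c₃) (hc₄ : 0 < c₄) (hc₅ : 0 < c₅)
    (φ₀ ω₀ α₀ : ℝ) (hθ₀ : (φ₀, ω₀, α₀) ∈ darTheta c₁ c₂ c₃ c₄ c₅)
    (Y e : Ω → ℝ) (hY : Measurable Y) (he : Measurable e)
    (heG : P.map e = gaussianReal 0 1) (hind : IndepFun Y e P) :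
    ∀ d : ℝ, 1 ≤ d →
      ∀ dir ∈ ({(1, 0, 0), (0, 1, 0), (0, 0, 1)} : Set (ℝ × ℝ × ℝ)),
        ∫⁻ ω', ⨆ θ ∈ darTheta c₁ c₂ c₃ c₄ c₅,
          ENNReal.ofReal
            (|fderiv ℝ
                (darL (Y ω') (φ₀ * Y ω' + e ω' * Real.sqrt (ω₀ + α₀ * Y ω' ^ 2))) θ dir|
              ^ d) ∂P < ⊤ := by
  intro d hd dir hdir
  obtain ⟨hφ₀, hω₀c, -, hα₀c, -⟩ := hθ₀
  have hd0 : (0:ℝ) ≤ d := le_trans zero_le_one hd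
  set C := darC c₁ c₂ c₄ ω₀ α₀ with hCdef
  have hK0 : 0 ≤ darK c₁ ω₀ α₀ := by
    rw [darK]; positivity
  have hB0 : 0 ≤ darB c₂ c₄ := by
    rw [darB]; positivity
  have hC0 : 0 ≤ C := by
    rw [hCdef, darC]
    have h1 := mul_nonneg (mul_nonneg (by norm_num : (0:ℝ) ≤ 2) hK0) hB0
    have h2 := mul_nonneg (sq_nonneg (darK c₁ ω₀ α₀)) (sq_nonneg (darB c₂ c₄))
    linarith
  have hdir1 : |dir.1| ≤ 1 ∧ |dir.2.1| ≤ 1 ∧ |dir.2.2| ≤ 1 := by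
    simp only [Set.mem_insert_iff, Set.mem_singleton_iff] at hdir
    rcases hdir with rfl | rfl | rfl <;> norm_num
  have hgm : Measurable fun x : ℝ => ENNReal.ofReal ((C * (1 + |x|) ^ 2) ^ d) := by
    apply Measurable.ennreal_ofReal
    exact (measurable_const.mul ((measurable_const.add measurable_abs).pow_const 2)).pow
      measurable_const
  calc ∫⁻ ω', ⨆ θ ∈ darTheta c₁ c₂ c₃ c₄ c₅,
        ENNReal.ofReal
          (|fderiv ℝ
              (darL (Y ω') (φ₀ * Y ω' + e ω' * Real.sqrt (ω₀ + α₀ * Y ω' ^ 2))) θ dir|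
            ^ d) ∂P
      ≤ ∫⁻ ω', ENNReal.ofReal ((C * (1 + |e ω'|) ^ 2) ^ d) ∂P := by
        apply lintegral_mono
        intro ω'
        apply iSup₂_le
        intro θ hθ
        apply ENNReal.ofReal_le_ofReal
        apply Real.rpow_le_rpow (abs_nonneg _) _ hd0
        obtain ⟨h1, h2, -, h4, -⟩ := hθ
        exact darL_deriv_bound c₁ c₂ c₄ φ₀ ω₀ α₀ hc₁ hc₂ hc₄ hφ₀ (by linarith) (by linarith)
          (Y ω') (e ω') θ h1 h2 h4 dir hdir1.1 hdir1.2.1 hdir1.2.2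
    _ = ∫⁻ x, ENNReal.ofReal ((C * (1 + |x|) ^ 2) ^ d) ∂(P.map e) := (lintegral_map hgm he).symm
    _ < ⊤ := by
        rw [heG]
        exact gauss_moment C d hC0 hd0
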